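/- (Appendix, first part: the intended stage relations form a fixed point of the stage-axiom operator.) Let G : (Set (α × α))⁵ → (Set (α × α))⁵ be the operator mapping a quintuple R = (R≺, R⪯, R⊀, R⋠, R◁) to the quintuple with components G(R)≺ = {(a,b) | ∃ c, (a,c) ∈ R⪯ ∧ (c,b) ∈ R◁}; G(R)⪯ = {(a,b) | a ∈ F {c | (c,b) ∈ R≺}}; G(R)⊀ = {(a,b) | b ∈ F ∅ ∨ (∃ c, (a,c) ∈ R⋠ ∧ (c,b) ∈ R◁) ∨ F ∅ = ∅}; G(R)⋠ = {(a,b) | a ∉ F {c | (c,b) ∉ R⊀}}; G(R)◁ = {(a,b) | a ∈ F {c | (c,a) ∈ R≺} ∧ b ∉ F {c | (c,a) ∉ R⊀} ∧ (b ∈ F {c | (c,a) ∈ R⪯} ∨ ∀ c, c ∈ F {c' | (c',a) ∉ R⋠} → c ∈ F {c' | (c',a) ∈ R≺})}. Let I be the intended quintuple: I≺ = {(a,b) | stage(a) < stage(b)}, I⪯ = {(a,b) | stage(a) ≤ stage(b) ∧ stage(a) ≤ f}, I⊀ = {(a,b) | stage(a) ≥ stage(b)}, I⋠ = {(a,b)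 | stage(a) > stage(b) ∨ stage(a) = f + 1}, I◁ = {(a,b) | stage(a) + 1 = stage(b)}. Then G(I) = I. -/
import Mathlib


/- The stage of an atom `a` under the staged fixed-point computation
(Algorithm 2): the least `l` with `a ∈ F^[l] ∅` if `a` belongs to the
fixed point `F^[f] ∅`, and `f + 1` otherwise. -/
open Classical in
noncomputable def stage {α : Type*} (F : Set α → Set α) (f : ℕ) (a : α) : ℕ :=
  if a ∈ F^[f] (∅ : Set α) then sInf {l : ℕ | a ∈ F^[l] (∅ : Set α)} else f + 1

/- A quintuple of binary relations on `α`, in the order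
(≺ strictly-before, ⪯ before, ⊀ not-strictly-before, ⋠ not-before,
◁ immediately-before). -/
abbrev Quint (α : Type*) :=
  Set (α × α) × Set (α × α) × Set (α × α) × Set (α × α) × Set (α × α)

namespace Quint

variable {α : Type*}

def lt (R : Quint α) : Set (α × α) := R.1
def le (R : Quint α) : Set (α × α) := R.2.1
def nlt (R : Quint α) : Set (α × α) := R.2.2.1
def nle (R : Quint α) : Set (α × α) := R.2.2.2.1
def imm (R : Quint α) : Set (α × α) := R.2.2.2.2

end Quint

/- The semantic stage-axiom operator (equations (1)–(5) of the paper). -/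
def G {α : Type*} (F : Set α → Set α) (R : Quint α) : Quint α :=
  ({p : α × α | ∃ c : α, (p.1, c) ∈ R.le ∧ (c, p.2) ∈ R.imm},
   {p : α × α | p.1 ∈ F {c : α | (c, p.2) ∈ R.lt}},
   {p : α × α | p.2 ∈ F ∅ ∨
      (∃ c : α, (p.1, c) ∈ R.nle ∧ (c, p.2) ∈ R.imm) ∨ F ∅ = ∅},
   {p : α × α | p.1 ∉ F {c : α | (c, p.2) ∉ R.nlt}},
   {p : α × α | p.1 ∈ F {c : α | (c, p.1) ∈ R.lt} ∧
      p.2 ∉ F {c : α | (c, p.1) ∉ R.nlt} ∧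
      (p.2 ∈ F {c : α | (c, p.1) ∈ R.le} ∨
        ∀ c : α, c ∈ F {c' : α | (c', p.1) ∉ R.nle} →
          c ∈ F {c' : α | (c', p.1) ∈ R.lt})})

/- The intended quintuple of stage-ordering relations. -/
noncomputable def I {α : Type*} (F : Set α → Set α) (f : ℕ) : Quint α :=
  ({p : α × α | stage F f p.1 < stage F f p.2},
   {p : α × α | stage F f p.1 ≤ stage F f p.2 ∧ stage F f p.1 ≤ f},
   {p : α × α | stage F f p.1 ≥ stage F f p.2},
   {p : α × α | stage F f p.1 > stage F f p.2 ∨ stage F f p.1 = f + 1},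
   {p : α × α | stage F f p.1 + 1 = stage F f p.2})

section Aux
variable {α : Type*} (F : Set α → Set α) (f : ℕ)

lemma S_mono (hF : Monotone F) : Monotone (fun j => F^[j] (∅ : Set α)) := by
  apply monotone_nat_of_le_succ
  intro n
  induction n with
  | zero => exact Set.empty_subset _
  | succ n ih =>
    show F^[n + 1] (∅ : Set α) ⊆ F^[n + 1 + 1] ∅
    rw [Function.iterate_succ_apply' F (n + 1) ∅]
    nth_rewrite 1 [Function.iterate_succ_apply' F n ∅]
    exact hF ih

lemma S_stab (hF : Monotone F) (hf : F^[f + 1] (∅ : Set α) = F^[f] ∅) :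
    ∀ l, f ≤ l → F^[l] (∅ : Set α) = F^[f] ∅ := by
  intro l hl
  induction l, hl using Nat.le_induction with
  | base => rfl
  | succ l hl ih =>
    rw [Function.iterate_succ_apply' F l ∅, ih, ← Function.iterate_succ_apply' F f ∅, hf]

lemma stage_le (a : α) : stage F f a ≤ f + 1 := by
  unfold stage
  split
  · exact le_trans (Nat.sInf_le ‹_›) (Nat.le_succ f)
  · exact le_refl _

lemma stage_pos (a : α) : 1 ≤ stage F f a := by
  unfold stage
  split
  · rename_i h
    rcases Nat.eq_zero_or_pos (sInf {l : ℕ | a ∈ F^[l] (∅ : Set α)}) with h0 | h1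
    · exfalso
      have := Nat.sInf_mem (s := {l : ℕ | a ∈ F^[l] (∅ : Set α)}) ⟨f, h⟩
      rw [h0] at this
      simpa using this
    · exact h1
  · omega

lemma stage_le_f_iff (a : α) : stage F f a ≤ f ↔ a ∈ F^[f] (∅ : Set α) := by
  unfold stage
  split
  · rename_i h
    exact iff_of_true (Nat.sInf_le h) h
  · rename_i h
    exact iff_of_false (by omega) h

lemma mem_S_iff (hF : Monotone F) (hf : F^[f + 1] (∅ : Set α) = F^[f] ∅)
    (a : α) (l : ℕ) :
    a ∈ F^[l] (∅ : Set α) ↔ stage F f a ≤ l ∧ stage F f a ≤ f := by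
  constructor
  · intro h
    have haf : a ∈ F^[f] (∅ : Set α) := by
      rcases le_or_gt l f with hlf | hfl
      · exact S_mono F hF hlf h
      · rwa [S_stab F f hF hf l hfl.le] at h
    refine ⟨?_, (stage_le_f_iff F f a).mpr haf⟩
    unfold stage
    rw [if_pos haf]
    exact Nat.sInf_le h
  · rintro ⟨h1, h2⟩
    have haf := (stage_le_f_iff F f a).mp h2
    have hmem : a ∈ F^[stage F f a] (∅ : Set α) := by
      have heq : stage F f a = sInf {l : ℕ | a ∈ F^[l] (∅ : Set α)} := by
        unfold stage; rw [if_pos haf]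
      rw [heq]
      exact Nat.sInf_mem ⟨f, show f ∈ {l : ℕ | a ∈ F^[l] (∅ : Set α)} from haf⟩
    exact S_mono F hF h1 hmem

lemma F_lt_eq (hF : Monotone F) (hf : F^[f + 1] (∅ : Set α) = F^[f] ∅) (b : α) :
    F {c : α | stage F f c < stage F f b} = F^[stage F f b] (∅ : Set α) := by
  have hset : {c : α | stage F f c < stage F f b} = F^[stage F f b - 1] (∅ : Set α) := by
    ext c
    rw [Set.mem_setOf_eq, mem_S_iff F f hF hf]
    have h1 := stage_le F f b
    have h2 := stage_pos F f b
    omega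
  rw [hset, ← Function.iterate_succ_apply' F (stage F f b - 1) ∅]
  congr 1
  have := stage_pos F f b
  omega

lemma F_le_eq (hF : Monotone F) (hf : F^[f + 1] (∅ : Set α) = F^[f] ∅) (b : α) :
    F {c : α | stage F f c ≤ stage F f b ∧ stage F f c ≤ f} =
      F^[stage F f b + 1] (∅ : Set α) := by
  have hset : {c : α | stage F f c ≤ stage F f b ∧ stage F f c ≤ f} =
      F^[stage F f b] (∅ : Set α) := by
    ext c
    exact (mem_S_iff F f hF hf c _).symm
  rw [hset, ← Function.iterate_succ_apply' F (stage F f b) ∅]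

lemma exists_stage (hF : Monotone F) (hf : F^[f + 1] (∅ : Set α) = F^[f] ∅)
    (hfmin : ∀ j : ℕ, F^[j + 1] (∅ : Set α) = F^[j] ∅ → f ≤ j)
    (k : ℕ) (h1 : 1 ≤ k) (h2 : k ≤ f) : ∃ c : α, stage F f c = k := by
  have hne : F^[k] (∅ : Set α) ≠ F^[k - 1] ∅ := by
    intro h
    have := hfmin (k - 1) (by rwa [show k - 1 + 1 = k from by omega])
    omega
  have hsub : F^[k - 1] (∅ : Set α) ⊆ F^[k] ∅ := S_mono F hF (by omega)
  obtain ⟨c, hck, hck'⟩ : ∃ c, c ∈ F^[k] (∅ : Set α) ∧ c ∉ F^[k - 1] ∅ := by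
    by_contra h
    push_neg at h
    exact hne (Set.Subset.antisymm (fun c hc => h c hc) hsub)
  rw [mem_S_iff F f hF hf] at hck hck'
  exact ⟨c, by omega⟩

end Aux


theorem intended_relations_are_fixed_point
    {α : Type*} [Fintype α] (F : Set α → Set α) (hF : Monotone F)
    (f : ℕ) (hf : F^[f + 1] ∅ = F^[f] ∅)
    (hfmin : ∀ j : ℕ, F^[j + 1] ∅ = F^[j] ∅ → f ≤ j) :
    G F (I F f) = I F f := by
  have hsle : ∀ a : α, stage F f a ≤ f + 1 := stage_le F f
  have hspos : ∀ a : α, 1 ≤ stage F f a := stage_pos F f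
  have memlt : ∀ a b : α, a ∈ F {c : α | stage F f c < stage F f b} ↔
      stage F f a ≤ stage F f b ∧ stage F f a ≤ f := fun a b => by
    rw [F_lt_eq F f hF hf b, mem_S_iff F f hF hf]
  have memle : ∀ a b : α, a ∈ F {c : α | stage F f c ≤ stage F f b ∧ stage F f c ≤ f} ↔
      stage F f a ≤ stage F f b + 1 ∧ stage F f a ≤ f := fun a b => by
    rw [F_le_eq F f hF hf b, mem_S_iff F f hF hf]
  have memempty : ∀ b : α, b ∈ F ∅ ↔ stage F f b ≤ 1 ∧ stage F f b ≤ f := fun b => by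
    rw [show F (∅ : Set α) = F^[1] ∅ from rfl, mem_S_iff F f hF hf]
  have hempty_iff : F (∅ : Set α) = ∅ ↔ f = 0 := by
    constructor
    · intro h
      have := hfmin 0 (show F^[0 + 1] (∅ : Set α) = F^[0] ∅ from h)
      omega
    · intro h
      have h2 := hf
      rw [h] at h2
      exact h2
  have hex : ∀ k, 1 ≤ k → k ≤ f → ∃ c : α, stage F f c = k :=
    exists_stage F f hF hf hfmin
  refine Prod.ext ?_ (Prod.ext ?_ (Prod.ext ?_ (Prod.ext ?_ ?_)))
  -- component 1 : lt
  · ext ⟨a, b⟩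
    show (∃ c : α, (stage F f a ≤ stage F f c ∧ stage F f a ≤ f) ∧
        stage F f c + 1 = stage F f b) ↔ stage F f a < stage F f b
    have h1 := hspos a
    have h2 := hsle b
    constructor
    · rintro ⟨c, ⟨hc1, hc2⟩, hc3⟩
      omega
    · intro h
      obtain ⟨c, hc⟩ := hex (stage F f b - 1) (by omega) (by omega)
      exact ⟨c, ⟨by omega, by omega⟩, by omega⟩
  -- component 2 : le
  · ext ⟨a, b⟩
    exact memlt a b
  -- component 3 : nlt
  · ext ⟨a, b⟩
    show (b ∈ F ∅ ∨
        (∃ c : α, (stage F f a > stage F f c ∨ stage F f a = f + 1) ∧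
          stage F f c + 1 = stage F f b) ∨ F ∅ = ∅) ↔
      stage F f a ≥ stage F f b
    rw [memempty b, hempty_iff]
    have h1 := hspos a
    have h2 := hsle a
    have h3 := hspos b
    have h4 := hsle b
    constructor
    · rintro (h | ⟨c, hc1, hc2⟩ | h)
      · omega
      · omega
      · omega
    · intro h
      by_cases hf0 : f = 0
      · right; right; exact hf0
      · by_cases hb1 : stage F f b = 1
        · left; omega
        · right; left
          obtain ⟨c, hc⟩ := hex (stage F f b - 1) (by omega) (by omega)
          exact ⟨c, by omega, by omega⟩
  -- component 4 : nle
  · ext ⟨a, b⟩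
    show a ∉ F {c : α | ¬ stage F f c ≥ stage F f b} ↔
      (stage F f a > stage F f b ∨ stage F f a = f + 1)
    have hset : {c : α | ¬ stage F f c ≥ stage F f b} =
        {c : α | stage F f c < stage F f b} := by
      ext c; exact not_le
    rw [hset, memlt a b]
    have h2 := hsle a
    omega
  -- component 5 : imm
  · ext ⟨a, b⟩
    show (a ∈ F {c : α | stage F f c < stage F f a} ∧
          b ∉ F {c : α | ¬ stage F f c ≥ stage F f a} ∧
          (b ∈ F {c : α | stage F f c ≤ stage F f a ∧ stage F f c ≤ f} ∨
            ∀ c : α,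
              c ∈ F {c' : α | ¬ (stage F f c' > stage F f a ∨ stage F f c' = f + 1)} →
              c ∈ F {c' : α | stage F f c' < stage F f a})) ↔
      stage F f a + 1 = stage F f b
    have hset1 : {c : α | ¬ stage F f c ≥ stage F f a} =
        {c : α | stage F f c < stage F f a} := by
      ext c; exact not_le
    have hset2 : {c' : α | ¬ (stage F f c' > stage F f a ∨ stage F f c' = f + 1)} =
        {c' : α | stage F f c' ≤ stage F f a ∧ stage F f c' ≤ f} := by
      ext c'
      have := hsle c'
      simp only [Set.mem_setOf_eq]
      omega
    rw [hset1, hset2]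
    simp only [memlt, memle]
    have h1 := hspos a
    have h2 := hsle a
    have h3 := hspos b
    have h4 := hsle b
    constructor
    · rintro ⟨ha, hb, hc | hc⟩
      · omega
      · by_cases hsa : stage F f a < f
        · obtain ⟨c, hcc⟩ := hex (stage F f a + 1) (by omega) (by omega)
          have := hc c (by omega)
          omega
        · omega
    · intro h
      refine ⟨⟨le_refl _, by omega⟩, by omega, ?_⟩
      by_cases hsb : stage F f b ≤ f
      · left; omega
      · right
        intro c hcmem
        have := hsle c
        omega
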